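/- arXiv:2405.01421 — 2 statements merged into one kernel-verified Lean document; each statement's English description precedes it below -/
import Mathlib

section
/- Let q ≥ 2 and let a_1, ..., a_M be M sequences of length L with entries in ℤ_q such that the associated complex sequences ψ(a_1), ..., ψ(a_M), where ψ(a_λ) = (ζ_q^{a_{λ,1}}, ..., ζ_q^{a_{λ,L}}), form a Golay complementary set. Then for every λ ∈ {1, ..., M}, PMEPR(a_λ) ≤ M; that is, |S_{a_λ}(u)|² ≤ M · L for every u ∈ [0, 1]. -/
/-- Aperiodic autocorrelation function of a length-`L` complex sequence
(indexed `0, ..., L-1`) at integer shift `τ`. -/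
noncomputable def rho (L : ℕ) (a : ℕ → ℂ) (τ : ℤ) : ℂ :=
  if 0 ≤ τ ∧ τ < (L : ℤ) then
    ∑ i ∈ Finset.range (L - τ.toNat), a i * (starRingEnd ℂ) (a (i + τ.toNat))
  else if -(L : ℤ) < τ ∧ τ < 0 then
    ∑ i ∈ Finset.range (L - (-τ).toNat), a (i + (-τ).toNat) * (starRingEnd ℂ) (a i)
  else 0

open Finset in
lemma sum_tri_le (L : ℕ) (f : ℕ → ℕ → ℂ) :
    ∑ p ∈ (range L ×ˢ range L).filter (fun p => p.2 ≤ p.1), f p.1 p.2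
      = ∑ d ∈ range L, ∑ j ∈ range (L - d), f (j + d) j := by
  rw [← Finset.sum_sigma (range L) (fun d => range (L - d)) (fun x => f (x.2 + x.1) x.2)]
  refine Finset.sum_nbij' (fun p => ⟨p.1 - p.2, p.2⟩) (fun x => (x.2 + x.1, x.2)) ?_ ?_ ?_ ?_ ?_
  · rintro ⟨i, j⟩ hp
    simp only [mem_filter, mem_product, mem_range] at hp ⊢
    simp only [Finset.mem_sigma, mem_range]
    omega
  · rintro ⟨d, j⟩ hx
    simp only [Finset.mem_sigma, mem_range] at hx
    simp only [mem_filter, mem_product, mem_range]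
    omega
  · rintro ⟨i, j⟩ hp
    simp only [mem_filter, mem_product, mem_range] at hp
    have : j + (i - j) = i := by omega
    simp [this]
  · rintro ⟨d, j⟩ hx
    simp
  · rintro ⟨i, j⟩ hp
    simp only [mem_filter, mem_product, mem_range] at hp
    have : j + (i - j) = i := by omega
    simp [this]

open Finset in
lemma sum_tri_gt (L : ℕ) (f : ℕ → ℕ → ℂ) :
    ∑ p ∈ (range L ×ˢ range L).filter (fun p => ¬ p.2 ≤ p.1), f p.1 p.2
      = ∑ d ∈ range L, ∑ i ∈ range (L - (d + 1)), f i (i + (d + 1)) := by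
  rw [← Finset.sum_sigma (range L) (fun d => range (L - (d+1))) (fun x => f x.2 (x.2 + (x.1 + 1)))]
  refine Finset.sum_nbij' (fun p => ⟨p.2 - p.1 - 1, p.1⟩) (fun x => (x.2, x.2 + (x.1 + 1))) ?_ ?_ ?_ ?_ ?_
  · rintro ⟨i, j⟩ hp
    simp only [mem_filter, mem_product, mem_range] at hp ⊢
    simp only [Finset.mem_sigma, mem_range]
    omega
  · rintro ⟨d, i⟩ hx
    simp only [Finset.mem_sigma, mem_range] at hx
    simp only [mem_filter, mem_product, mem_range]
    omega
  · rintro ⟨i, j⟩ hp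
    simp only [mem_filter, mem_product, mem_range] at hp
    have : i + (j - i - 1 + 1) = j := by omega
    simp [this]
  · rintro ⟨d, i⟩ hx
    simp
  · rintro ⟨i, j⟩ hp
    simp only [mem_filter, mem_product, mem_range] at hp
    have : i + (j - i - 1 + 1) = j := by omega
    simp [this]

/-- If the `ℤ_q`-valued sequences `a 0, ..., a (M-1)` of length `L` are such that the
associated complex sequences `ψ λ = (ζ_q ^ (a λ i))_{i<L}` form a Golay complementary set,
then each sequence has PMEPR at most `M`: `|S_{a λ}(u)|² ≤ M·L` for all `u ∈ [0,1]`. -/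
theorem pmepr_le_of_gcs (q L M : ℕ) (hq : 2 ≤ q)
    (a : Fin M → ℕ → ZMod q)
    (ψ : Fin M → ℕ → ℂ)
    (hψ : ∀ lam i, ψ lam i =
      Complex.exp (2 * Real.pi * Complex.I * ((a lam i).val : ℂ) / (q : ℂ)))
    (hGCS : ∀ τ : ℤ, τ ≠ 0 → ∑ lam : Fin M, rho L (ψ lam) τ = 0)
    (S : Fin M → ℝ → ℂ)
    (hS : ∀ lam u, S lam u = ∑ i ∈ Finset.range L,
      Complex.exp (2 * Real.pi * Complex.I * ((a lam i).val : ℂ) / (q : ℂ)) *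
        Complex.exp (2 * Real.pi * Complex.I * (i : ℂ) * (u : ℂ))) :
    ∀ lam : Fin M, ∀ u : ℝ, 0 ≤ u → u ≤ 1 →
      ‖S lam u‖ ^ 2 ≤ (M : ℝ) * (L : ℝ) := by
  classical
  open Finset in
  intro lam u _ _
  rcases Nat.eq_zero_or_pos L with hL | hL
  · subst hL
    simp [hS]
  -- the complex exponential factor
  set E : ℕ → ℂ := fun i => Complex.exp (2 * Real.pi * Complex.I * (i : ℂ) * (u : ℂ)) with hE
  have hSψ : ∀ μ : Fin M, S μ u = ∑ i ∈ range L, ψ μ i * E i := by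
    intro μ
    rw [hS]
    exact Finset.sum_congr rfl fun i _ => by rw [hψ]
  -- unimodularity of ψ
  have hunit : ∀ (μ : Fin M) (i : ℕ), ψ μ i * (starRingEnd ℂ) (ψ μ i) = 1 := by
    intro μ i
    rw [hψ, ← Complex.exp_conj, ← Complex.exp_add]
    have : (starRingEnd ℂ) (2 * Real.pi * Complex.I * (((a μ i).val : ℕ) : ℂ) / (q : ℂ))
        = -(2 * Real.pi * Complex.I * (((a μ i).val : ℕ) : ℂ) / (q : ℂ)) := by
      simp [map_div₀, map_mul, map_ofNat, Complex.conj_I]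
      ring
    rw [this, add_neg_cancel, Complex.exp_zero]
  -- exponential factor identities
  have hE1 : ∀ d j : ℕ, E (j + d) * (starRingEnd ℂ) (E j) = E d := by
    intro d j
    rw [hE]
    simp only []
    rw [← Complex.exp_conj, ← Complex.exp_add]
    congr 1
    have : (starRingEnd ℂ) (2 * Real.pi * Complex.I * (j : ℂ) * (u : ℂ))
        = -(2 * Real.pi * Complex.I * (j : ℂ) * (u : ℂ)) := by
      simp [map_mul, map_ofNat, Complex.conj_I]
    rw [this]
    push_cast
    ring
  have hE2 : ∀ d i : ℕ, E i * (starRingEnd ℂ) (E (i + d)) = (starRingEnd ℂ) (E d) := by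
    intro d i
    have := congrArg (starRingEnd ℂ) (hE1 d i)
    simpa [map_mul, mul_comm] using this
  -- expansion of |S|^2 along diagonals
  have key1 : ∀ μ : Fin M,
      S μ u * (starRingEnd ℂ) (S μ u)
        = (∑ d ∈ range L, E d * ∑ j ∈ range (L - d), ψ μ (j + d) * (starRingEnd ℂ) (ψ μ j))
          + ∑ d ∈ range L, (starRingEnd ℂ) (E (d + 1)) *
              ∑ i ∈ range (L - (d + 1)), ψ μ i * (starRingEnd ℂ) (ψ μ (i + (d + 1))) := by
    intro μ
    rw [hSψ, map_sum, Finset.sum_mul_sum, ← Finset.sum_product',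
      ← Finset.sum_filter_add_sum_filter_not (range L ×ˢ range L) (fun p => p.2 ≤ p.1)]
    congr 1
    · rw [sum_tri_le L (fun i j => (ψ μ i * E i) * (starRingEnd ℂ) (ψ μ j * E j))]
      refine Finset.sum_congr rfl fun d _ => ?_
      rw [Finset.mul_sum]
      refine Finset.sum_congr rfl fun j _ => ?_
      rw [map_mul]
      calc (ψ μ (j + d) * E (j + d)) * ((starRingEnd ℂ) (ψ μ j) * (starRingEnd ℂ) (E j))
          = (E (j + d) * (starRingEnd ℂ) (E j)) * (ψ μ (j + d) * (starRingEnd ℂ) (ψ μ j)) := by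
            ring
        _ = E d * (ψ μ (j + d) * (starRingEnd ℂ) (ψ μ j)) := by rw [hE1]
    · rw [sum_tri_gt L (fun i j => (ψ μ i * E i) * (starRingEnd ℂ) (ψ μ j * E j))]
      refine Finset.sum_congr rfl fun d _ => ?_
      rw [Finset.mul_sum]
      refine Finset.sum_congr rfl fun i _ => ?_
      rw [map_mul]
      calc (ψ μ i * E i) * ((starRingEnd ℂ) (ψ μ (i + (d + 1))) * (starRingEnd ℂ) (E (i + (d + 1))))
          = (E i * (starRingEnd ℂ) (E (i + (d + 1)))) *
              (ψ μ i * (starRingEnd ℂ) (ψ μ (i + (d + 1)))) := by ring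
        _ = (starRingEnd ℂ) (E (d + 1)) * (ψ μ i * (starRingEnd ℂ) (ψ μ (i + (d + 1)))) := by
            rw [hE2]
  -- relating inner diagonal sums to rho
  have hrho_neg : ∀ (μ : Fin M) (d : ℕ), 0 < d →
      ∑ j ∈ range (L - d), ψ μ (j + d) * (starRingEnd ℂ) (ψ μ j) = rho L (ψ μ) (-(d : ℤ)) := by
    intro μ d hd
    unfold rho
    by_cases h : d < L
    · rw [if_neg (by omega), if_pos (by constructor <;> omega)]
      simp
    · rw [if_neg (by omega), if_neg (by omega)]
      have : L - d = 0 := by omega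
      simp [this]
  have hrho_pos : ∀ (μ : Fin M) (d : ℕ), 0 < d →
      ∑ i ∈ range (L - d), ψ μ i * (starRingEnd ℂ) (ψ μ (i + d)) = rho L (ψ μ) (d : ℤ) := by
    intro μ d hd
    unfold rho
    by_cases h : d < L
    · rw [if_pos (by constructor <;> omega)]
      simp
    · rw [if_neg (by omega), if_neg (by omega)]
      have : L - d = 0 := by omega
      simp [this]
  -- the key identity
  have Key : ∑ μ : Fin M, S μ u * (starRingEnd ℂ) (S μ u) = (M : ℂ) * (L : ℂ) := by
    calc ∑ μ : Fin M, S μ u * (starRingEnd ℂ) (S μ u)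
        = ∑ μ : Fin M,
            ((∑ d ∈ range L, E d * ∑ j ∈ range (L - d), ψ μ (j + d) * (starRingEnd ℂ) (ψ μ j))
            + ∑ d ∈ range L, (starRingEnd ℂ) (E (d + 1)) *
                ∑ i ∈ range (L - (d + 1)), ψ μ i * (starRingEnd ℂ) (ψ μ (i + (d + 1)))) :=
          Finset.sum_congr rfl fun μ _ => key1 μ
      _ = (∑ d ∈ range L, E d *
              ∑ μ : Fin M, ∑ j ∈ range (L - d), ψ μ (j + d) * (starRingEnd ℂ) (ψ μ j))
          + ∑ d ∈ range L, (starRingEnd ℂ) (E (d + 1)) *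
              ∑ μ : Fin M, ∑ i ∈ range (L - (d + 1)),
                ψ μ i * (starRingEnd ℂ) (ψ μ (i + (d + 1))) := by
          rw [Finset.sum_add_distrib]
          congr 1
          · rw [Finset.sum_comm]
            exact Finset.sum_congr rfl fun d _ => (Finset.mul_sum _ _ _).symm
          · rw [Finset.sum_comm]
            exact Finset.sum_congr rfl fun d _ => (Finset.mul_sum _ _ _).symm
      _ = (M : ℂ) * (L : ℂ) := by
          have hsecond : ∀ d ∈ range L,
              (starRingEnd ℂ) (E (d + 1)) *
                ∑ μ : Fin M, ∑ i ∈ range (L - (d + 1)),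
                  ψ μ i * (starRingEnd ℂ) (ψ μ (i + (d + 1))) = 0 := by
            intro d _
            have : ∑ μ : Fin M, ∑ i ∈ range (L - (d + 1)),
                ψ μ i * (starRingEnd ℂ) (ψ μ (i + (d + 1)))
                = ∑ μ : Fin M, rho L (ψ μ) ((d + 1 : ℕ) : ℤ) :=
              Finset.sum_congr rfl fun μ _ => hrho_pos μ (d + 1) (by omega)
            rw [this, hGCS _ (by exact_mod_cast Nat.succ_ne_zero d), mul_zero]
          rw [Finset.sum_congr rfl hsecond, Finset.sum_const, smul_zero, add_zero]
          rw [Finset.sum_eq_single_of_mem 0 (Finset.mem_range.mpr hL) ?_]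
          · have h0 : ∀ μ : Fin M,
                ∑ j ∈ range (L - 0), ψ μ (j + 0) * (starRingEnd ℂ) (ψ μ j) = (L : ℂ) := by
              intro μ
              simp [hunit]
            rw [Finset.sum_congr rfl fun μ _ => h0 μ, Finset.sum_const, Finset.card_univ,
              Fintype.card_fin, nsmul_eq_mul]
            have : E 0 = 1 := by simp [hE]
            rw [this, one_mul]
          · intro b _ hb
            have : ∑ μ : Fin M, ∑ j ∈ range (L - b), ψ μ (j + b) * (starRingEnd ℂ) (ψ μ j)
                = ∑ μ : Fin M, rho L (ψ μ) (-(b : ℤ)) :=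
              Finset.sum_congr rfl fun μ _ => hrho_neg μ b (Nat.pos_of_ne_zero hb)
            rw [this, hGCS _ (by simpa using hb), mul_zero]
  -- conclude
  have KeyR : ∑ μ : Fin M, Complex.normSq (S μ u) = (M : ℝ) * (L : ℝ) := by
    have := Key
    simp only [Complex.mul_conj] at this
    exact_mod_cast this
  rw [Complex.sq_norm]
  calc Complex.normSq (S lam u)
      ≤ ∑ μ : Fin M, Complex.normSq (S μ u) :=
        Finset.single_le_sum (f := fun μ => Complex.normSq (S μ u)) (fun μ _ => Complex.normSq_nonneg _) (Finset.mem_univ lam)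
    _ = (M : ℝ) * (L : ℝ) := KeyR
end

section
/- Let p ≥ 2 and q ≥ 2 be integers with p ∣ q, let m ≥ 2, let π be a permutation of {1, ..., m−1} with π(1) = 1, and let c_1, ..., c_{m−1}, c′ ∈ ℤ_q. For each γ ∈ ℤ_p define b^γ : ℤ_p^{m−1} → ℤ_q by b^γ(x_1, ..., x_{m−1}) = (q/p) Σ_{α=1}^{m−2} x_{π(α)} x_{π(α+1)} + Σ_{α=1}^{m−1} c_α x_α + c′ + γ (q/p) x_{π(1)}, where the digits x_α ∈ {0, ..., p−1} are viewed as elements of ℤ_q and all arithmetic is modulo q. Let ψ(b^γ) be the complex sequence (ζ_q^{b^γ(i⃗)})_{i=0}^{p^{m−1}−1}, where i⃗ ∈ {0, ..., p−1}^{m−1} is the vector of p-ary digits of i and ζ_q = e^{2π√−1/q}. Then {ψ(b^γ) : γ ∈ ℤ_p} is a Golay complementary set of p sequences of length p^{m−1}, i.e., a (q, p, p^{m−1})-GCS. -/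
namespace GCSaux

def D (p n k : ℕ) : ℕ := n / p ^ k % p

def Rep (p n k u : ℕ) : ℕ := n / p ^ (k+1) * p ^ (k+1) + u * p ^ k + n % p ^ k

theorem D_lt (p n k : ℕ) (hp : 0 < p) : D p n k < p := Nat.mod_lt _ hp

theorem decomp (p n k : ℕ) : n = n / p ^ (k+1) * p ^ (k+1) + D p n k * p ^ k + n % p ^ k := by
  have h1 := Nat.div_add_mod n (p ^ k)
  have h2 := Nat.div_add_mod (n / p ^ k) p
  have h3 : n / p ^ k / p = n / p ^ (k+1) := by rw [Nat.div_div_eq_div_mul, pow_succ]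
  rw [h3] at h2
  unfold D
  conv_lhs => rw [← h1, ← h2]
  ring

theorem Rep_add (p n k u : ℕ) : Rep p n k u + D p n k * p ^ k = n + u * p ^ k := by
  have := decomp p n k
  unfold Rep
  omega

theorem Rep_div (p n k u : ℕ) (hp : 0 < p) (hu : u < p) :
    Rep p n k u / p ^ (k+1) = n / p ^ (k+1) := by
  have hpk : 0 < p ^ k := pow_pos hp k
  have hlt : u * p ^ k + n % p ^ k < p ^ (k+1) := by
    have h1 : n % p ^ k < p ^ k := Nat.mod_lt _ hpk
    have h3 : p ^ (k+1) = p * p ^ k := by ring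
    nlinarith
  unfold Rep
  rw [add_assoc, mul_comm, Nat.mul_add_div (pow_pos hp (k+1)),
    Nat.div_eq_of_lt hlt, add_zero]

theorem Rep_mod (p n k u : ℕ) (hp : 0 < p) : Rep p n k u % p ^ k = n % p ^ k := by
  have hpk : 0 < p ^ k := pow_pos hp k
  have hdvd : p ^ k ∣ n / p ^ (k+1) * p ^ (k+1) + u * p ^ k :=
    Dvd.dvd.add (Dvd.dvd.mul_left (pow_dvd_pow p (by omega)) _) (Dvd.dvd.mul_left dvd_rfl u)
  obtain ⟨c, hc⟩ := hdvd
  unfold Rep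
  rw [hc, mul_comm, Nat.mul_add_mod' , Nat.mod_mod_of_dvd _ dvd_rfl]

theorem D_Rep_self (p n k u : ℕ) (hp : 0 < p) (hu : u < p) : D p (Rep p n k u) k = u := by
  have hpk : 0 < p ^ k := pow_pos hp k
  have h1 : n % p ^ k < p ^ k := Nat.mod_lt _ hpk
  unfold D Rep
  have : n / p ^ (k+1) * p ^ (k+1) + u * p ^ k + n % p ^ k
      = p ^ k * (n / p ^ (k+1) * p + u) + n % p ^ k := by ring
  rw [this, Nat.mul_add_div hpk, Nat.div_eq_of_lt h1, add_zero, Nat.mul_add_mod' _ _ _,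
    Nat.mod_eq_of_lt hu]

theorem Rep_D (p n k : ℕ) : Rep p n k (D p n k) = n := (decomp p n k).symm

theorem Rep_Rep (p n k u u' : ℕ) (hp : 0 < p) (hu : u < p) :
    Rep p (Rep p n k u) k u' = Rep p n k u' := by
  show (Rep p n k u) / p ^ (k+1) * p ^ (k+1) + u' * p ^ k + (Rep p n k u) % p ^ k = _
  rw [Rep_div p n k u hp hu, Rep_mod p n k u hp]
  rfl

-- digit below k unchanged: uses that D depends only on n % p^(l+1)
theorem D_eq_of_mod_eq (p n n' k l : ℕ) (hp : 0 < p) (h : n % p ^ k = n' % p ^ k)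
    (hl : l < k) : D p n l = D p n' l := by
  have key : ∀ nn : ℕ, nn / p ^ l % p = nn % p ^ k / p ^ l % p := by
    intro nn
    have hpl : 0 < p ^ l := pow_pos hp l
    have e : nn / p ^ l = p ^ (k - l - 1) * (nn / p ^ k) * p + nn % p ^ k / p ^ l := by
      conv_lhs => rw [← Nat.div_add_mod nn (p ^ k)]
      have hk : p ^ k = p ^ l * (p ^ (k - l - 1) * p) := by
        rw [← pow_succ, ← pow_add]
        congr 1
        omega
      rw [hk, mul_assoc, Nat.mul_add_div hpl, ← mul_assoc]
      ring_nf
    rw [e, Nat.mul_add_mod' _ _ _]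
  unfold D
  rw [key n, key n', h]

theorem Rep_lt (p n k u M : ℕ) (hp : 0 < p) (hu : u < p) (hk : k < M) (hn : n < p ^ M) :
    Rep p n k u < p ^ M := by
  have hdiv : n / p ^ (k+1) < p ^ (M - (k+1)) := by
    rw [Nat.div_lt_iff_lt_mul (pow_pos hp (k+1)), ← pow_add]
    have : M - (k+1) + (k+1) = M := by omega
    rwa [this]
  have h2 := Rep_div p n k u hp hu
  have h3 : Rep p n k u % p ^ (k+1) < p ^ (k+1) := Nat.mod_lt _ (pow_pos hp _)
  have h4 := Nat.div_add_mod (Rep p n k u) (p ^ (k+1))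
  have h5 : p ^ M = p ^ (k+1) * p ^ (M - (k+1)) := by rw [← pow_add]; congr 1; omega
  have h6 : p ^ (k+1) * (n / p ^ (k+1) + 1) ≤ p ^ M := by
    rw [h5]; exact Nat.mul_le_mul_left _ (by omega)
  have h7 : p ^ (k+1) * (n / p ^ (k+1) + 1) = p ^ (k+1) * (n / p ^ (k+1)) + p ^ (k+1) := by ring
  rw [h2] at h4
  linarith

theorem D_div (p n j k : ℕ) : D p (n / p ^ j) k = D p n (k + j) := by
  unfold D
  rw [Nat.div_div_eq_div_mul, ← pow_add, add_comm j k]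

theorem D_Rep_ne (p n k u l : ℕ) (hp : 0 < p) (hu : u < p) (hne : l ≠ k) :
    D p (Rep p n k u) l = D p n l := by
  rcases Nat.lt_or_ge l k with hl | hl
  · exact D_eq_of_mod_eq p _ _ k l hp (Rep_mod p n k u hp) hl
  · have hl' : k + 1 ≤ l := by omega
    have e : ∀ nn : ℕ, D p nn l = D p (nn / p ^ (k+1)) (l - (k+1)) := by
      intro nn
      rw [D_div]
      congr 1
      omega
    rw [e, e n, Rep_div p n k u hp hu]

theorem digits_inj (p : ℕ) (hp : 0 < p) : ∀ (M n n' : ℕ), n < p ^ M → n' < p ^ M →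
    (∀ k < M, D p n k = D p n' k) → n = n' := by
  intro M
  induction M with
  | zero => intro n n' hn hn' _; simp at hn hn'; omega
  | succ M ih =>
    intro n n' hn hn' h
    have e0 : ∀ nn : ℕ, D p nn 0 = nn % p := by
      intro nn; unfold D; rw [pow_zero, Nat.div_one]
    have h0 := h 0 (by omega)
    rw [e0, e0] at h0
    have hdiv : n / p = n' / p := by
      apply ih
      · rw [Nat.div_lt_iff_lt_mul hp, ← pow_succ]; exact hn
      · rw [Nat.div_lt_iff_lt_mul hp, ← pow_succ]; exact hn'
      · intro k hk
        have h1 := h (k+1) (by omega)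
        have e1 : ∀ nn : ℕ, D p (nn / p) k = D p nn (k + 1) := by
          intro nn
          have := D_div p nn 1 k
          rwa [pow_one] at this
        rw [e1, e1, h1]
    have d1 := Nat.div_add_mod n p
    have d2 := Nat.div_add_mod n' p
    have : p * (n / p) = p * (n' / p) := by rw [hdiv]
    omega

noncomputable def F (q : ℕ) [NeZero q] (a : ZMod q) : ℂ :=
  Complex.exp (2 * Real.pi * Complex.I / q) ^ a.val

theorem zeta_pow_q (q : ℕ) [NeZero q] :
    Complex.exp (2 * Real.pi * Complex.I / q) ^ q = 1 :=
  (Complex.isPrimitiveRoot_exp q (NeZero.ne q)).pow_eq_one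

theorem zeta_pow_mod (q : ℕ) [NeZero q] (n : ℕ) :
    Complex.exp (2 * Real.pi * Complex.I / q) ^ n
      = Complex.exp (2 * Real.pi * Complex.I / q) ^ (n % q) := by
  conv_lhs => rw [← Nat.div_add_mod n q]
  rw [pow_add, pow_mul, zeta_pow_q, one_pow, one_mul]

theorem F_natCast (q : ℕ) [NeZero q] (n : ℕ) :
    F q (n : ZMod q) = Complex.exp (2 * Real.pi * Complex.I / q) ^ n := by
  rw [F, ZMod.val_natCast, ← zeta_pow_mod]

theorem F_add (q : ℕ) [NeZero q] (a b : ZMod q) : F q (a + b) = F q a * F q b := by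
  have h1 : a + b = ((a.val + b.val : ℕ) : ZMod q) := by push_cast [ZMod.natCast_val, ZMod.cast_id]; ring
  rw [h1, F_natCast, pow_add, F, F]

theorem F_zero (q : ℕ) [NeZero q] : F q 0 = 1 := by
  rw [F, ZMod.val_zero, pow_zero]

theorem F_ne_zero (q : ℕ) [NeZero q] (a : ZMod q) : F q a ≠ 0 :=
  pow_ne_zero _ (Complex.exp_ne_zero _)

theorem F_neg (q : ℕ) [NeZero q] (a : ZMod q) : F q (-a) = (F q a)⁻¹ := by
  have h : F q (-a) * F q a = 1 := by rw [← F_add, neg_add_cancel, F_zero]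
  exact eq_inv_of_mul_eq_one_left h

theorem F_sub (q : ℕ) [NeZero q] (a b : ZMod q) : F q (a - b) = F q a * (F q b)⁻¹ := by
  rw [sub_eq_add_neg, F_add, F_neg]

theorem F_conj (q : ℕ) [NeZero q] (a : ZMod q) : (starRingEnd ℂ) (F q a) = (F q a)⁻¹ := by
  rw [F, map_pow, ← inv_pow]
  congr 1
  rw [← Complex.exp_conj, ← Complex.exp_neg]
  congr 1
  simp only [map_div₀, map_mul, Complex.conj_I, map_ofNat, Complex.conj_ofReal,
    Complex.conj_natCast]
  ring

theorem F_nsmul (q : ℕ) [NeZero q] (u : ℕ) (a : ZMod q) :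
    F q ((u : ZMod q) * a) = F q a ^ u := by
  induction u with
  | zero => simp [F_zero]
  | succ n ih => push_cast [add_mul, one_mul, F_add, ih]; rw [pow_succ]

theorem F_eq_exp (q : ℕ) [NeZero q] (a : ZMod q) :
    F q a = Complex.exp (2 * Real.pi * Complex.I * (a.val : ℂ) / q) := by
  rw [F, ← Complex.exp_nat_mul]
  congr 1
  ring

theorem geom_zero (p : ℕ) (w : ℂ) (hw : w ≠ 1) (h1 : w ^ p = 1) :
    ∑ u ∈ Finset.range p, w ^ u = 0 := by
  rw [geom_sum_eq hw, h1, sub_self, zero_div]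

theorem omega_prim (p q : ℕ) [NeZero q] (hp : 0 < p) (hpq : p ∣ q) :
    IsPrimitiveRoot (Complex.exp (2 * Real.pi * Complex.I / q) ^ (q / p)) p := by
  refine IsPrimitiveRoot.pow (Nat.pos_of_ne_zero (NeZero.ne q))
    (Complex.isPrimitiveRoot_exp q (NeZero.ne q)) ?_
  exact (Nat.div_mul_cancel hpq).symm

theorem F_qdiv (p q : ℕ) [NeZero q] (a : ℕ) :
    F q (((q / p : ℕ) : ZMod q) * (a : ZMod q))
      = (Complex.exp (2 * Real.pi * Complex.I / q) ^ (q / p)) ^ a := by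
  rw [← Nat.cast_mul, F_natCast, pow_mul]

theorem zmod_sum_val {M : Type*} [AddCommMonoid M] (p : ℕ) [NeZero p] (f : ℕ → M) :
    ∑ γ : ZMod p, f γ.val = ∑ u ∈ Finset.range p, f u := by
  refine Finset.sum_bij' (fun γ _ => γ.val) (fun u _ => (u : ZMod p)) ?_ ?_ ?_ ?_ ?_
  · intro γ _; exact Finset.mem_range.mpr (ZMod.val_lt γ)
  · intro u _; exact Finset.mem_univ _
  · intro γ _; exact ZMod.natCast_rightInverse γ
  · intro u hu; exact ZMod.val_cast_of_lt (Finset.mem_range.mp hu)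
  · intro γ _; rfl
def Pp (p m t : ℕ) (π : Equiv.Perm ℕ) (i α : ℕ) : Prop :=
  α ∈ Finset.Icc 1 (m-1) ∧ D p i (π α - 1) ≠ D p (i+t) (π α - 1)

noncomputable def Af (p m t : ℕ) (π : Equiv.Perm ℕ) (i : ℕ) : ℕ := sInf {α | Pp p m t π i α}

noncomputable def Kf (p m t : ℕ) (π : Equiv.Perm ℕ) (i : ℕ) : ℕ := π (Af p m t π i - 1) - 1

section
variable {p m t : ℕ} {π : Equiv.Perm ℕ} {i u : ℕ}

theorem perm_surj (hπ : ∀ α ∈ Finset.Icc 1 (m-1), π α ∈ Finset.Icc 1 (m-1))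
    (γ : ℕ) (hγ : γ ∈ Finset.Icc 1 (m-1)) : ∃ α ∈ Finset.Icc 1 (m-1), π α = γ := by
  have himg : Finset.image π (Finset.Icc 1 (m-1)) = Finset.Icc 1 (m-1) := by
    apply Finset.eq_of_subset_of_card_le
    · exact Finset.image_subset_iff.mpr hπ
    · rw [Finset.card_image_of_injective _ π.injective]
  rw [← himg] at hγ
  exact Finset.mem_image.mp hγ

theorem exists_Pp (hp : 2 ≤ p) (hπ : ∀ α ∈ Finset.Icc 1 (m-1), π α ∈ Finset.Icc 1 (m-1))
    (ht : 1 ≤ t) (hi : i + t < p ^ (m-1)) : ∃ α, Pp p m t π i α := by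
  by_contra h
  push_neg at h
  have heq : i = i + t := by
    apply digits_inj p (by omega) (m-1) i (i+t) (by omega) hi
    intro k hk
    obtain ⟨α, hα, hπα⟩ := perm_surj hπ (k+1) (Finset.mem_Icc.mpr ⟨by omega, by omega⟩)
    have := h α
    rw [Pp, not_and, not_ne_iff] at this
    have := this hα
    rwa [hπα, Nat.add_sub_cancel] at this
  omega

theorem Pp_A (hp : 2 ≤ p) (hπ : ∀ α ∈ Finset.Icc 1 (m-1), π α ∈ Finset.Icc 1 (m-1))
    (ht : 1 ≤ t) (hi : i + t < p ^ (m-1)) : Pp p m t π i (Af p m t π i) :=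
  Nat.sInf_mem (exists_Pp hp hπ ht hi)

theorem A_min {α : ℕ} (h : α < Af p m t π i) : ¬ Pp p m t π i α :=
  Nat.notMem_of_lt_sInf h

theorem A_two (hp : 2 ≤ p) (hπ : ∀ α ∈ Finset.Icc 1 (m-1), π α ∈ Finset.Icc 1 (m-1))
    (hπ1 : π 1 = 1) (ht : 1 ≤ t) (hi : i + t < p ^ (m-1))
    (hT : D p i 0 = D p (i+t) 0) : 2 ≤ Af p m t π i := by
  have h1 := Pp_A hp hπ ht hi
  have hmem := h1.1
  rw [Finset.mem_Icc] at hmem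
  rcases Nat.lt_or_ge (Af p m t π i) 2 with h2 | h2
  · have he : Af p m t π i = 1 := by omega
    exfalso
    apply h1.2
    rw [he, hπ1]
    simpa using hT
  · exact h2

theorem A_sub_one_mem (hp : 2 ≤ p) (hπ : ∀ α ∈ Finset.Icc 1 (m-1), π α ∈ Finset.Icc 1 (m-1))
    (hπ1 : π 1 = 1) (ht : 1 ≤ t) (hi : i + t < p ^ (m-1))
    (hT : D p i 0 = D p (i+t) 0) : Af p m t π i - 1 ∈ Finset.Icc 1 (m-1) := by
  have h2 := A_two hp hπ hπ1 ht hi hT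
  have hmem := (Pp_A hp hπ ht hi).1
  rw [Finset.mem_Icc] at hmem ⊢
  omega

theorem beta_mem (hp : 2 ≤ p) (hπ : ∀ α ∈ Finset.Icc 1 (m-1), π α ∈ Finset.Icc 1 (m-1))
    (hπ1 : π 1 = 1) (ht : 1 ≤ t) (hi : i + t < p ^ (m-1))
    (hT : D p i 0 = D p (i+t) 0) : π (Af p m t π i - 1) ∈ Finset.Icc 1 (m-1) :=
  hπ _ (A_sub_one_mem hp hπ hπ1 ht hi hT)

theorem D_eq_below (hp : 2 ≤ p) {α : ℕ} (hα : α ∈ Finset.Icc 1 (m-1))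
    (hlt : α < Af p m t π i) : D p i (π α - 1) = D p (i+t) (π α - 1) := by
  have := A_min (i := i) hlt
  rw [Pp, not_and, not_ne_iff] at this
  exact this hα

theorem v0_eq (hp : 2 ≤ p) (hπ : ∀ α ∈ Finset.Icc 1 (m-1), π α ∈ Finset.Icc 1 (m-1))
    (hπ1 : π 1 = 1) (ht : 1 ≤ t) (hi : i + t < p ^ (m-1))
    (hT : D p i 0 = D p (i+t) 0) : D p i (Kf p m t π i) = D p (i+t) (Kf p m t π i) := by
  have h2 := A_two hp hπ hπ1 ht hi hT
  exact D_eq_below hp (A_sub_one_mem hp hπ hπ1 ht hi hT) (by omega)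

theorem rep_shift (hp : 2 ≤ p) (hπ : ∀ α ∈ Finset.Icc 1 (m-1), π α ∈ Finset.Icc 1 (m-1))
    (hπ1 : π 1 = 1) (ht : 1 ≤ t) (hi : i + t < p ^ (m-1))
    (hT : D p i 0 = D p (i+t) 0) (u : ℕ) :
    Rep p i (Kf p m t π i) u + t = Rep p (i+t) (Kf p m t π i) u := by
  have hv := v0_eq hp hπ hπ1 ht hi hT
  have h1 := Rep_add p i (Kf p m t π i) u
  have h2 := Rep_add p (i+t) (Kf p m t π i) u
  rw [← hv] at h2
  omega

theorem rep_lt' (hp : 2 ≤ p) (hπ : ∀ α ∈ Finset.Icc 1 (m-1), π α ∈ Finset.Icc 1 (m-1))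
    (hπ1 : π 1 = 1) (ht : 1 ≤ t) (hi : i + t < p ^ (m-1))
    (hT : D p i 0 = D p (i+t) 0) (hu : u < p) :
    Rep p i (Kf p m t π i) u + t < p ^ (m-1) := by
  rw [rep_shift hp hπ hπ1 ht hi hT u]
  have hβ := beta_mem hp hπ hπ1 ht hi hT
  rw [Finset.mem_Icc] at hβ
  have hkeq : Kf p m t π i = π (Af p m t π i - 1) - 1 := rfl
  exact Rep_lt p (i+t) _ u (m-1) (by omega) hu (by omega) hi

theorem rep_T (hp : 2 ≤ p) (hπ : ∀ α ∈ Finset.Icc 1 (m-1), π α ∈ Finset.Icc 1 (m-1))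
    (hπ1 : π 1 = 1) (ht : 1 ≤ t) (hi : i + t < p ^ (m-1))
    (hT : D p i 0 = D p (i+t) 0) (hu : u < p) :
    D p (Rep p i (Kf p m t π i) u) 0 = D p (Rep p i (Kf p m t π i) u + t) 0 := by
  rw [rep_shift hp hπ hπ1 ht hi hT u]
  set k := Kf p m t π i with hkdef
  rcases Nat.eq_zero_or_pos k with hk | hk
  · rw [hk, D_Rep_self p i 0 u (by omega) hu, D_Rep_self p (i+t) 0 u (by omega) hu]
  · rw [D_Rep_ne p i k u 0 (by omega) hu (by omega),
      D_Rep_ne p (i+t) k u 0 (by omega) hu (by omega)]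
    exact hT

theorem Pp_rep_iff (hp : 2 ≤ p) (hπ : ∀ α ∈ Finset.Icc 1 (m-1), π α ∈ Finset.Icc 1 (m-1))
    (hπ1 : π 1 = 1) (ht : 1 ≤ t) (hi : i + t < p ^ (m-1))
    (hT : D p i 0 = D p (i+t) 0) (hu : u < p) (α : ℕ) :
    Pp p m t π (Rep p i (Kf p m t π i) u) α ↔ Pp p m t π i α := by
  set k := Kf p m t π i with hkdef
  by_cases hα : α ∈ Finset.Icc 1 (m-1)
  · have hsh := rep_shift hp hπ hπ1 ht hi hT u
    have hβ := beta_mem hp hπ hπ1 ht hi hT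
    rw [Finset.mem_Icc] at hβ
    have hπα := hπ α hα
    rw [Finset.mem_Icc] at hπα
    by_cases hc : α = Af p m t π i - 1
    · -- position is k; both digits become u; originally both equal
      have h2 := A_two hp hπ hπ1 ht hi hT
      have hlt : α < Af p m t π i := by omega
      have hpos : π α - 1 = k := by rw [hc, hkdef]; rfl
      constructor
      · intro hP
        exfalso
        apply hP.2
        rw [hpos, hsh, D_Rep_self p i k u (by omega) hu, D_Rep_self p (i+t) k u (by omega) hu]
      · intro hP
        exact absurd hP (A_min hlt)
    · -- position differs from k
      have hkeq : k = π (Af p m t π i - 1) - 1 := by rw [hkdef]; rfl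
      have hβ2 := beta_mem hp hπ hπ1 ht hi hT
      rw [Finset.mem_Icc] at hβ2
      have hne : π α - 1 ≠ k := by
        intro hcontra
        have : π α = π (Af p m t π i - 1) := by omega
        exact hc (π.injective this)
      unfold Pp
      rw [hsh, D_Rep_ne p i k u _ (by omega) hu hne, D_Rep_ne p (i+t) k u _ (by omega) hu hne]
  · constructor <;> intro hP <;> exact absurd hP.1 hα

theorem A_rep (hp : 2 ≤ p) (hπ : ∀ α ∈ Finset.Icc 1 (m-1), π α ∈ Finset.Icc 1 (m-1))
    (hπ1 : π 1 = 1) (ht : 1 ≤ t) (hi : i + t < p ^ (m-1))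
    (hT : D p i 0 = D p (i+t) 0) (hu : u < p) :
    Af p m t π (Rep p i (Kf p m t π i) u) = Af p m t π i := by
  unfold Af
  congr 1
  ext α
  exact Pp_rep_iff hp hπ hπ1 ht hi hT hu α

end

theorem Bdiff (p q m t : ℕ) [NeZero p] (hp : 2 ≤ p) (hm : 2 ≤ m)
    (π : Equiv.Perm ℕ)
    (hπ : ∀ α ∈ Finset.Icc 1 (m - 1), π α ∈ Finset.Icc 1 (m - 1))
    (hπ1 : π 1 = 1)
    (c : ℕ → ZMod q) (c' : ZMod q)
    (dig : ℕ → ℕ → ℕ) (hdig : ∀ i α, dig i α = i / p ^ (α - 1) % p)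
    (b : ZMod p → ℕ → ZMod q)
    (hb : ∀ γ i, b γ i =
      ((q / p : ℕ) : ZMod q) *
          ∑ α ∈ Finset.Icc 1 (m - 2),
            ((dig i (π α) : ZMod q) * (dig i (π (α + 1)) : ZMod q)) +
        ∑ α ∈ Finset.Icc 1 (m - 1), c α * (dig i α : ZMod q) + c' +
        (γ.val : ZMod q) * ((q / p : ℕ) : ZMod q) * (dig i (π 1) : ZMod q))
    (i u : ℕ) (ht : 1 ≤ t) (hi : i + t < p ^ (m - 1))
    (hT : D p i 0 = D p (i + t) 0) (hu : u < p)
    (hv0 : D p i (Kf p m t π i) = 0) :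
    b 0 (Rep p i (Kf p m t π i) u) - b 0 (Rep p i (Kf p m t π i) u + t)
      = b 0 i - b 0 (i + t)
        + (u : ZMod q) * (((q / p : ℕ) : ZMod q) *
            ((D p i (π (Af p m t π i) - 1) : ZMod q)
              - (D p (i + t) (π (Af p m t π i) - 1) : ZMod q))) := by
  have hd : ∀ n α, dig n α = D p n (α - 1) := fun n α => hdig n α
  have hb0 : ∀ n : ℕ, b 0 n =
      ((q / p : ℕ) : ZMod q) *
          (∑ α ∈ Finset.Icc 1 (m - 2),
            ((D p n (π α - 1) : ZMod q) * (D p n (π (α + 1) - 1) : ZMod q))) +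
        ∑ α ∈ Finset.Icc 1 (m - 1), c α * (D p n (α - 1) : ZMod q) + c' := by
    intro n
    rw [hb]
    simp only [hd, ZMod.val_zero, Nat.cast_zero, zero_mul, add_zero]
  have hsh := rep_shift hp hπ hπ1 ht hi hT u
  have hvj : D p (i + t) (Kf p m t π i) = 0 := by
    rw [← v0_eq hp hπ hπ1 ht hi hT]; exact hv0
  have hA2 : 2 ≤ Af p m t π i := A_two hp hπ hπ1 ht hi hT
  have hAmem : Af p m t π i ∈ Finset.Icc 1 (m - 1) := (Pp_A hp hπ ht hi).1
  rw [Finset.mem_Icc] at hAmem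
  have hβ := beta_mem hp hπ hπ1 ht hi hT
  rw [Finset.mem_Icc] at hβ
  set A := Af p m t π i with hAdef
  set k := Kf p m t π i with hkdef
  have hkeq : k = π (A - 1) - 1 := rfl
  have hposne : ∀ γ' : ℕ, γ' ∈ Finset.Icc 1 (m - 1) → γ' ≠ A - 1 → π γ' - 1 ≠ k := by
    intro γ' hγ' hne hcontra
    have hγ'' := hπ γ' hγ'
    rw [Finset.mem_Icc] at hγ''
    have : π γ' = π (A - 1) := by omega
    exact hne (π.injective this)
  have hDi : ∀ l, l ≠ k → D p (Rep p i k u) l = D p i l :=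
    fun l hl => D_Rep_ne p i k u l (by omega) hu hl
  have hDj : ∀ l, l ≠ k → D p (Rep p (i + t) k u) l = D p (i + t) l :=
    fun l hl => D_Rep_ne p (i + t) k u l (by omega) hu hl
  have hDik : D p (Rep p i k u) k = u := D_Rep_self p i k u (by omega) hu
  have hDjk : D p (Rep p (i + t) k u) k = u := D_Rep_self p (i + t) k u (by omega) hu
  rw [hsh, hb0, hb0, hb0, hb0]
  have CL : (∑ α ∈ Finset.Icc 1 (m - 1), c α * (D p (Rep p i k u) (α - 1) : ZMod q))
      - (∑ α ∈ Finset.Icc 1 (m - 1), c α * (D p (Rep p (i + t) k u) (α - 1) : ZMod q))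
      = (∑ α ∈ Finset.Icc 1 (m - 1), c α * (D p i (α - 1) : ZMod q))
        - (∑ α ∈ Finset.Icc 1 (m - 1), c α * (D p (i + t) (α - 1) : ZMod q)) := by
    rw [← Finset.sum_sub_distrib, ← Finset.sum_sub_distrib]
    apply Finset.sum_congr rfl
    intro α hα
    rw [← mul_sub, ← mul_sub]
    congr 1
    by_cases hαk : α - 1 = k
    · rw [hαk, hDik, hDjk, hv0, hvj]
      simp
    · rw [hDi _ hαk, hDj _ hαk]
  have CQ : (∑ α ∈ Finset.Icc 1 (m - 2),
        ((D p (Rep p i k u) (π α - 1) : ZMod q) * (D p (Rep p i k u) (π (α + 1) - 1) : ZMod q)))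
      - (∑ α ∈ Finset.Icc 1 (m - 2),
        ((D p (Rep p (i + t) k u) (π α - 1) : ZMod q)
          * (D p (Rep p (i + t) k u) (π (α + 1) - 1) : ZMod q)))
      = (∑ α ∈ Finset.Icc 1 (m - 2),
          ((D p i (π α - 1) : ZMod q) * (D p i (π (α + 1) - 1) : ZMod q)))
        - (∑ α ∈ Finset.Icc 1 (m - 2),
          ((D p (i + t) (π α - 1) : ZMod q) * (D p (i + t) (π (α + 1) - 1) : ZMod q)))
        + (u : ZMod q) * ((D p i (π A - 1) : ZMod q) - (D p (i + t) (π A - 1) : ZMod q)) := by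
    rw [← Finset.sum_sub_distrib, ← Finset.sum_sub_distrib]
    have hAm1mem : A - 1 ∈ Finset.Icc 1 (m - 2) := by
      rw [Finset.mem_Icc]; omega
    rw [show (∑ α ∈ Finset.Icc 1 (m - 2),
          ((D p i (π α - 1) : ZMod q) * (D p i (π (α + 1) - 1) : ZMod q)
            - (D p (i + t) (π α - 1) : ZMod q) * (D p (i + t) (π (α + 1) - 1) : ZMod q)))
        + (u : ZMod q) * ((D p i (π A - 1) : ZMod q) - (D p (i + t) (π A - 1) : ZMod q))
      = ∑ α ∈ Finset.Icc 1 (m - 2),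
          ((D p i (π α - 1) : ZMod q) * (D p i (π (α + 1) - 1) : ZMod q)
            - (D p (i + t) (π α - 1) : ZMod q) * (D p (i + t) (π (α + 1) - 1) : ZMod q)
            + if α = A - 1 then
                (u : ZMod q) * ((D p i (π A - 1) : ZMod q) - (D p (i + t) (π A - 1) : ZMod q))
              else 0) from by
        rw [Finset.sum_add_distrib, Finset.sum_ite_eq' (Finset.Icc 1 (m - 2)) (A - 1)]
        rw [if_pos hAm1mem]]
    apply Finset.sum_congr rfl
    intro α hα
    have hα' : α ∈ Finset.Icc 1 (m - 1) := by
      rw [Finset.mem_Icc] at hα ⊢; omega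
    have hα1' : α + 1 ∈ Finset.Icc 1 (m - 1) := by
      rw [Finset.mem_Icc] at hα ⊢; omega
    by_cases hc1 : α = A - 1
    · -- α = A - 1 : first factor at position k, second at π A
      have hA1 : α + 1 = A := by omega
      have hne2 : π A - 1 ≠ k := by
        apply hposne A (Finset.mem_Icc.mpr ⟨by omega, by omega⟩)
        omega
      have hpos1 : π α - 1 = k := by rw [hc1, hkeq]
      rw [if_pos hc1, hA1, hpos1, hDik, hDjk, hDi _ hne2, hDj _ hne2, hv0, hvj]
      push_cast
      ring
    · by_cases hc2 : α + 1 = A - 1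
      · -- second factor at position k, first strictly below A
        have hne1 : π α - 1 ≠ k := hposne _ hα' hc1
        have hpos2 : π (α + 1) - 1 = k := by rw [hc2, hkeq]
        have hbelow : D p i (π α - 1) = D p (i + t) (π α - 1) :=
          D_eq_below hp hα' (by omega)
        rw [if_neg hc1, hpos2, hDik, hDjk, hDi _ hne1, hDj _ hne1, hv0, hvj, hbelow]
        push_cast
        ring
      · have hne1 : π α - 1 ≠ k := hposne _ hα' hc1
        have hne2 : π (α + 1) - 1 ≠ k := hposne _ hα1' hc2
        rw [if_neg hc1, hDi _ hne1, hDj _ hne1, hDi _ hne2, hDj _ hne2]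
        ring
  linear_combination ((q / p : ℕ) : ZMod q) * CQ + CL

theorem sum_pow_F_eq_zero (p q : ℕ) [NeZero q] (hp : 2 ≤ p) (hpq : p ∣ q)
    (a b : ℕ) (ha : a < p) (hb : b < p) (hab : a ≠ b) :
    ∑ u ∈ Finset.range p,
      (F q (((q / p : ℕ) : ZMod q) * ((a : ZMod q) - (b : ZMod q)))) ^ u = 0 := by
  have hprim := omega_prim p q (by omega) hpq
  have hw : F q (((q / p : ℕ) : ZMod q) * ((a : ZMod q) - (b : ZMod q)))
      = (Complex.exp (2 * Real.pi * Complex.I / q) ^ (q / p)) ^ a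
        * ((Complex.exp (2 * Real.pi * Complex.I / q) ^ (q / p)) ^ b)⁻¹ := by
    rw [mul_sub, F_sub, F_qdiv, F_qdiv]
  have hωb : (Complex.exp (2 * Real.pi * Complex.I / q) ^ (q / p)) ^ b ≠ 0 :=
    pow_ne_zero _ (pow_ne_zero _ (Complex.exp_ne_zero _))
  apply geom_zero
  · rw [hw, ← div_eq_mul_inv]
    intro hcontra
    rw [div_eq_one_iff_eq hωb] at hcontra
    exact hab (hprim.pow_inj ha hb hcontra)
  · rw [← F_nsmul, ← mul_assoc, ← Nat.cast_mul, Nat.mul_div_cancel' hpq, ZMod.natCast_self,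
      zero_mul, F_zero]

theorem main_pos (p q m : ℕ) [NeZero p]
    (hp : 2 ≤ p) (hq : 2 ≤ q) (hpq : p ∣ q) (hm : 2 ≤ m)
    (π : Equiv.Perm ℕ)
    (hπ : ∀ α ∈ Finset.Icc 1 (m - 1), π α ∈ Finset.Icc 1 (m - 1))
    (hπ1 : π 1 = 1)
    (c : ℕ → ZMod q) (c' : ZMod q)
    (dig : ℕ → ℕ → ℕ) (hdig : ∀ i α, dig i α = i / p ^ (α - 1) % p)
    (b : ZMod p → ℕ → ZMod q)
    (hb : ∀ γ i, b γ i =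
      ((q / p : ℕ) : ZMod q) *
          ∑ α ∈ Finset.Icc 1 (m - 2),
            ((dig i (π α) : ZMod q) * (dig i (π (α + 1)) : ZMod q)) +
        ∑ α ∈ Finset.Icc 1 (m - 1), c α * (dig i α : ZMod q) + c' +
        (γ.val : ZMod q) * ((q / p : ℕ) : ZMod q) * (dig i (π 1) : ZMod q))
    (ψ : ZMod p → ℕ → ℂ)
    (hψ : ∀ γ i, ψ γ i =
      Complex.exp (2 * Real.pi * Complex.I * ((b γ i).val : ℂ) / (q : ℂ)))
    (t : ℕ) (ht : 1 ≤ t) (htL : t < p ^ (m - 1)) :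
    ∑ γ : ZMod p, ∑ i ∈ Finset.range (p ^ (m - 1) - t),
      ψ γ i * (starRingEnd ℂ) (ψ γ (i + t)) = 0 := by
  haveI : NeZero q := ⟨by omega⟩
  have hψF : ∀ γ n, ψ γ n = F q (b γ n) := by
    intro γ n; rw [hψ, F_eq_exp]
  have hd : ∀ n α, dig n α = D p n (α - 1) := fun n α => hdig n α
  have hdlt : ∀ n l, D p n l < p := fun n l => D_lt p n l (by omega)
  -- split off the γ-dependent part
  have hsplit : ∀ (γ : ZMod p) (n : ℕ), b γ n = b 0 n +
      (γ.val : ZMod q) * (((q / p : ℕ) : ZMod q) * ((D p n 0 : ZMod q))) := by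
    intro γ n
    rw [hb, hb]
    simp only [ZMod.val_zero, Nat.cast_zero, zero_mul, add_zero, hπ1, hd]
    ring
  rw [Finset.sum_comm]
  have key1 : ∀ i : ℕ, (∑ γ : ZMod p, ψ γ i * (starRingEnd ℂ) (ψ γ (i + t)))
      = (if D p i 0 = D p (i + t) 0 then (p : ℂ) else 0) * F q (b 0 i - b 0 (i + t)) := by
    intro i
    have hterm : ∀ γ : ZMod p, ψ γ i * (starRingEnd ℂ) (ψ γ (i + t))
        = (F q (((q / p : ℕ) : ZMod q) * ((D p i 0 : ZMod q) - (D p (i + t) 0 : ZMod q)))) ^ γ.val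
          * F q (b 0 i - b 0 (i + t)) := by
      intro γ
      rw [hψF, hψF, F_conj, ← F_neg, ← F_add, ← F_nsmul, ← F_add]
      congr 1
      rw [hsplit γ i, hsplit γ (i + t)]
      ring
    rw [Finset.sum_congr rfl (fun γ _ => hterm γ), ← Finset.sum_mul]
    congr 1
    rw [zmod_sum_val p (fun u =>
      (F q (((q / p : ℕ) : ZMod q) * ((D p i 0 : ZMod q) - (D p (i + t) 0 : ZMod q)))) ^ u)]
    by_cases hD : D p i 0 = D p (i + t) 0
    · rw [if_pos hD, hD, sub_self, mul_zero, F_zero]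
      simp
    · rw [if_neg hD]
      exact sum_pow_F_eq_zero p q hp hpq _ _ (hdlt i 0) (hdlt (i + t) 0) hD
  rw [Finset.sum_congr rfl (fun i _ => key1 i)]
  have hite : ∀ i : ℕ, (if D p i 0 = D p (i + t) 0 then (p : ℂ) else 0)
        * F q (b 0 i - b 0 (i + t))
      = if D p i 0 = D p (i + t) 0 then (p : ℂ) * F q (b 0 i - b 0 (i + t)) else 0 := by
    intro i
    by_cases hD : D p i 0 = D p (i + t) 0 <;> simp [hD]
  rw [Finset.sum_congr rfl (fun i _ => hite i), ← Finset.sum_filter, ← Finset.mul_sum]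
  -- the core combinatorial cancellation
  have hzero : ∑ i ∈ (Finset.range (p ^ (m - 1) - t)).filter
      (fun i => D p i 0 = D p (i + t) 0), F q (b 0 i - b 0 (i + t)) = 0 := by
    set T := (Finset.range (p ^ (m - 1) - t)).filter
      (fun i => D p i 0 = D p (i + t) 0) with hTdef
    have hmemT : ∀ i, i ∈ T ↔ (i + t < p ^ (m - 1) ∧ D p i 0 = D p (i + t) 0) := by
      intro i
      rw [hTdef, Finset.mem_filter, Finset.mem_range]
      omega
    have hmaps : ∀ i ∈ T, (Rep p i (Kf p m t π i) 0) ∈ T := by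
      intro i hi
      rw [hmemT] at hi ⊢
      exact ⟨rep_lt' hp hπ hπ1 ht hi.1 hi.2 (by omega),
        rep_T hp hπ hπ1 ht hi.1 hi.2 (by omega)⟩
    rw [← Finset.sum_fiberwise_of_maps_to hmaps]
    apply Finset.sum_eq_zero
    intro j hj
    rw [hmemT] at hj
    have hKrep : ∀ i, i + t < p ^ (m - 1) → D p i 0 = D p (i + t) 0 → ∀ u < p,
        Kf p m t π (Rep p i (Kf p m t π i) u) = Kf p m t π i := by
      intro i hi1 hi2 u hu
      have h := A_rep hp hπ hπ1 ht hi1 hi2 hu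
      calc Kf p m t π (Rep p i (Kf p m t π i) u)
          = π (Af p m t π (Rep p i (Kf p m t π i) u) - 1) - 1 := rfl
        _ = π (Af p m t π i - 1) - 1 := by rw [h]
        _ = Kf p m t π i := rfl
    by_cases hv : D p j (Kf p m t π j) = 0
    · -- fiber is the orbit of j
      have hfib : T.filter (fun i => Rep p i (Kf p m t π i) 0 = j)
          = (Finset.range p).image (fun u => Rep p j (Kf p m t π j) u) := by
        ext i
        rw [Finset.mem_filter, hmemT, Finset.mem_image]
        constructor
        · rintro ⟨⟨hi1, hi2⟩, hgi⟩
          refine ⟨D p i (Kf p m t π i), Finset.mem_range.mpr (hdlt _ _), ?_⟩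
          have hK : Kf p m t π j = Kf p m t π i := by
            rw [← hgi]; exact hKrep i hi1 hi2 0 (by omega)
          rw [hK, ← hgi, Rep_Rep p i _ 0 _ (by omega) (by omega), Rep_D]
        · rintro ⟨u, hu, rfl⟩
          rw [Finset.mem_range] at hu
          refine ⟨⟨rep_lt' hp hπ hπ1 ht hj.1 hj.2 hu, rep_T hp hπ hπ1 ht hj.1 hj.2 hu⟩, ?_⟩
          rw [hKrep j hj.1 hj.2 u hu, Rep_Rep p j _ u 0 (by omega) hu, ← hv, Rep_D]
      rw [hfib, Finset.sum_image ?hinj]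
      case hinj =>
        intro u1 hu1 u2 hu2 heq
        have e1 := D_Rep_self p j (Kf p m t π j) u1 (by omega) (Finset.mem_range.mp hu1)
        have e2 := D_Rep_self p j (Kf p m t π j) u2 (by omega) (Finset.mem_range.mp hu2)
        rw [show Rep p j (Kf p m t π j) u1 = Rep p j (Kf p m t π j) u2 from heq] at e1
        omega
      -- now apply Bdiff and the geometric sum
      have hBd : ∀ u < p, b 0 (Rep p j (Kf p m t π j) u) - b 0 (Rep p j (Kf p m t π j) u + t)
          = b 0 j - b 0 (j + t)
            + (u : ZMod q) * (((q / p : ℕ) : ZMod q) *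
                ((D p j (π (Af p m t π j) - 1) : ZMod q)
                  - (D p (j + t) (π (Af p m t π j) - 1) : ZMod q))) :=
        fun u hu => Bdiff p q m t hp hm π hπ hπ1 c c' dig hdig b hb j u ht hj.1 hj.2 hu hv
      have hstep : ∀ u ∈ Finset.range p,
          F q (b 0 (Rep p j (Kf p m t π j) u) - b 0 (Rep p j (Kf p m t π j) u + t))
          = (F q (((q / p : ℕ) : ZMod q) *
                ((D p j (π (Af p m t π j) - 1) : ZMod q)
                  - (D p (j + t) (π (Af p m t π j) - 1) : ZMod q)))) ^ u
            * F q (b 0 j - b 0 (j + t)) := by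
        intro u hu
        rw [hBd u (Finset.mem_range.mp hu), F_add, F_nsmul]
        ring
      rw [Finset.sum_congr rfl hstep, ← Finset.sum_mul]
      have hPA := Pp_A (i := j) (t := t) hp hπ ht hj.1
      rw [sum_pow_F_eq_zero p q hp hpq _ _ (hdlt _ _) (hdlt _ _) hPA.2, zero_mul]
    · -- fiber is empty
      apply Finset.sum_eq_zero
      intro i hi
      exfalso
      rw [Finset.mem_filter, hmemT] at hi
      obtain ⟨⟨hi1, hi2⟩, hgi⟩ := hi
      apply hv
      have hK : Kf p m t π j = Kf p m t π i := by
        rw [← hgi]; exact hKrep i hi1 hi2 0 (by omega)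
      rw [hK, ← hgi]
      exact D_Rep_self p i _ 0 (by omega) (by omega)
  rw [hzero, mul_zero]


end GCSaux

/-- Let `p, q ≥ 2` with `p ∣ q`, `m ≥ 2`, `π` a permutation of `{1, ..., m-1}` with
`π(1) = 1`, and `c_1, ..., c_{m-1}, c' ∈ ℤ_q`. For `γ ∈ ℤ_p` define
`b^γ(x) = (q/p) Σ_{α=1}^{m-2} x_{π(α)} x_{π(α+1)} + Σ_{α=1}^{m-1} c_α x_α + c' + γ(q/p)x_{π(1)}`.
Then the complex sequences `ψ(b^γ) = (ζ_q^{b^γ(i⃗)})_{i=0}^{p^{m-1}-1}`, `γ ∈ ℤ_p`, form a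
`(q, p, p^{m-1})`-Golay complementary set. Here `dig i α` is the `α`-th (1-based) `p`-ary
digit of `i`. -/
theorem gcs_first_order (p q m : ℕ) [NeZero p]
    (hp : 2 ≤ p) (hq : 2 ≤ q) (hpq : p ∣ q) (hm : 2 ≤ m)
    (π : Equiv.Perm ℕ)
    (hπ : ∀ α ∈ Finset.Icc 1 (m - 1), π α ∈ Finset.Icc 1 (m - 1))
    (hπ1 : π 1 = 1)
    (c : ℕ → ZMod q) (c' : ZMod q)
    (dig : ℕ → ℕ → ℕ) (hdig : ∀ i α, dig i α = i / p ^ (α - 1) % p)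
    (b : ZMod p → ℕ → ZMod q)
    (hb : ∀ γ i, b γ i =
      ((q / p : ℕ) : ZMod q) *
          ∑ α ∈ Finset.Icc 1 (m - 2),
            ((dig i (π α) : ZMod q) * (dig i (π (α + 1)) : ZMod q)) +
        ∑ α ∈ Finset.Icc 1 (m - 1), c α * (dig i α : ZMod q) + c' +
        (γ.val : ZMod q) * ((q / p : ℕ) : ZMod q) * (dig i (π 1) : ZMod q))
    (ψ : ZMod p → ℕ → ℂ)
    (hψ : ∀ γ i, ψ γ i =
      Complex.exp (2 * Real.pi * Complex.I * ((b γ i).val : ℂ) / (q : ℂ))) :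
    ∀ τ : ℤ, τ ≠ 0 → ∑ γ : ZMod p, rho (p ^ (m - 1)) (ψ γ) τ = 0 := by
  intro τ hτ
  by_cases h1 : 0 ≤ τ ∧ τ < ((p ^ (m - 1) : ℕ) : ℤ)
  · have ht1 : 1 ≤ τ.toNat := by omega
    have ht2 : τ.toNat < p ^ (m - 1) := by omega
    have e : ∀ γ : ZMod p, rho (p ^ (m - 1)) (ψ γ) τ
        = ∑ i ∈ Finset.range (p ^ (m - 1) - τ.toNat),
            ψ γ i * (starRingEnd ℂ) (ψ γ (i + τ.toNat)) := by
      intro γ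
      rw [rho, if_pos h1]
    rw [Finset.sum_congr rfl (fun γ _ => e γ)]
    exact GCSaux.main_pos p q m hp hq hpq hm π hπ hπ1 c c' dig hdig b hb ψ hψ τ.toNat ht1 ht2
  · by_cases h2 : -((p ^ (m - 1) : ℕ) : ℤ) < τ ∧ τ < 0
    · have hs1 : 1 ≤ (-τ).toNat := by omega
      have hs2 : (-τ).toNat < p ^ (m - 1) := by omega
      have e : ∀ γ : ZMod p, rho (p ^ (m - 1)) (ψ γ) τ
          = (starRingEnd ℂ) (∑ i ∈ Finset.range (p ^ (m - 1) - (-τ).toNat),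
              ψ γ i * (starRingEnd ℂ) (ψ γ (i + (-τ).toNat))) := by
        intro γ
        rw [rho, if_neg h1, if_pos h2, map_sum]
        apply Finset.sum_congr rfl
        intro i _
        rw [map_mul, Complex.conj_conj]
        ring
      rw [Finset.sum_congr rfl (fun γ _ => e γ), ← map_sum,
        GCSaux.main_pos p q m hp hq hpq hm π hπ hπ1 c c' dig hdig b hb ψ hψ (-τ).toNat hs1 hs2,
        map_zero]
    · have e : ∀ γ : ZMod p, rho (p ^ (m - 1)) (ψ γ) τ = 0 := by
        intro γ
        rw [rho, if_neg h1, if_neg h2]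
      rw [Finset.sum_congr rfl (fun γ _ => e γ), Finset.sum_const, smul_zero]
end
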